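/- For n ≥ 0, the following identities hold in ℤ[s,t]: Σ_{p ∈ S_n} (1+s)^{des(p)} (1+t)^{des(p^{-1})} = Σ_{(u,v) ∈ Bur[n]} s^{n − max(u)} t^{n − max(v)}, and Σ_{p ∈ S_n} (1+s)^{des(p)} (1+t)^{asc(p^{-1})} = Σ_{(u,v) ∈ BBur[n]} s^{n − max(u)} t^{n − max(v)}. In other words, the two-sided Eulerian polynomial A_n(s,t) = Σ_{p ∈ S_n} s^{des(p)} t^{des(p^{-1})} satisfies A_n(1+s,1+t) = B_n(s,t), and its strict variant A∘_n(s,t) = Σ_{p ∈ S_n} s^{des(p)} t^{asc(p^{-1})} satisfies A∘_n(1+s,1+t) = B∘_n(s,t). -/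

import Mathlib

namespace CayPaper

/-- A word of length `n` (1-indexed): it vanishes outside `{1,…,n}`. -/
def IsWord (n : ℕ) (v : ℕ → ℕ) : Prop := ∀ i, i ∉ Set.Icc 1 n → v i = 0

/-- A Cayley permutation of length `n`: a word on `{1,…,n}` whose image is `{1,…,k}`
for some `k ≤ n`. -/
def IsCayley (n : ℕ) (v : ℕ → ℕ) : Prop :=
  IsWord n v ∧ ∃ k, v '' Set.Icc 1 n = Set.Icc 1 k

/-- A weakly increasing Cayley permutation of length `n`. -/
def IsWI (n : ℕ) (v : ℕ → ℕ) : Prop :=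
  IsCayley n v ∧ MonotoneOn v (Set.Icc 1 n)

/-- A permutation of `{1,…,n}`, encoded as a word. -/
def IsPermWord (n : ℕ) (v : ℕ → ℕ) : Prop :=
  IsWord n v ∧ Set.BijOn v (Set.Icc 1 n) (Set.Icc 1 n)

/-- The weak descent set `Des(v) = { i ∈ {1,…,n−1} : v(i) ≥ v(i+1) }`. -/
def desSet (n : ℕ) (v : ℕ → ℕ) : Finset ℕ :=
  (Finset.Icc 1 (n - 1)).filter fun i => v (i + 1) ≤ v i

/-- The strict descent set `Des∘(v) = { i : v(i) > v(i+1) }`. -/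
def sdesSet (n : ℕ) (v : ℕ → ℕ) : Finset ℕ :=
  (Finset.Icc 1 (n - 1)).filter fun i => v (i + 1) < v i

/-- The weak ascent set `Asc(v) = { i : v(i) ≤ v(i+1) }`. -/
def ascSet (n : ℕ) (v : ℕ → ℕ) : Finset ℕ :=
  (Finset.Icc 1 (n - 1)).filter fun i => v i ≤ v (i + 1)

/-- The strict ascent set `Asc∘(v) = { i : v(i) < v(i+1) }`. -/
def sascSet (n : ℕ) (v : ℕ → ℕ) : Finset ℕ :=
  (Finset.Icc 1 (n - 1)).filter fun i => v i < v (i + 1)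

def des (n : ℕ) (v : ℕ → ℕ) : ℕ := (desSet n v).card
def sdes (n : ℕ) (v : ℕ → ℕ) : ℕ := (sdesSet n v).card
def asc (n : ℕ) (v : ℕ → ℕ) : ℕ := (ascSet n v).card
def sasc (n : ℕ) (v : ℕ → ℕ) : ℕ := (sascSet n v).card

/-- The maximum value of a word. -/
def wmax (n : ℕ) (v : ℕ → ℕ) : ℕ := (Finset.Icc 1 n).sup v

/-- Reverse: `v^r(i) = v(n+1−i)`. -/
def wrev (n : ℕ) (v : ℕ → ℕ) : ℕ → ℕ := fun i =>
  if 1 ≤ i ∧ i ≤ n then v (n + 1 - i) else 0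

/-- Complement: `v^c(i) = max(v)+1−v(i)`. -/
def wcomp (n : ℕ) (v : ℕ → ℕ) : ℕ → ℕ := fun i =>
  if 1 ≤ i ∧ i ≤ n then wmax n v + 1 - v i else 0

/-- The word `(σ(1), …, σ(n))` (1-indexed) of a permutation `σ` of `Fin n`. -/
def permWord (n : ℕ) (σ : Equiv.Perm (Fin n)) : ℕ → ℕ := fun i =>
  if h : 1 ≤ i ∧ i ≤ n then ((σ ⟨i - 1, by omega⟩ : Fin n) : ℕ) + 1 else 0

/-- The conjugate of `u`: the unique weakly increasing Cayley permutation of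
length `n` whose descent set is `{1,…,n−1} \ Des(u)`. -/
noncomputable def conjWI (n : ℕ) (u : ℕ → ℕ) : ℕ → ℕ :=
  haveI := Classical.dec (∃ w, IsWI n w ∧ desSet n w = Finset.Icc 1 (n - 1) \ desSet n u)
  if h : ∃ w, IsWI n w ∧ desSet n w = Finset.Icc 1 (n - 1) \ desSet n u
    then h.choose else fun _ => 0

/-- A Burge matrix: every row and every column contains a nonzero entry. -/
def IsBurge {p q : ℕ} (M : Matrix (Fin p) (Fin q) ℕ) : Prop :=
  (∀ i, ∃ j, M i j ≠ 0) ∧ (∀ j, ∃ i, M i j ≠ 0)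

/-- The size of a matrix with natural entries: the sum of its entries. -/
def matSize {p q : ℕ} (M : Matrix (Fin p) (Fin q) ℕ) : ℕ := ∑ i, ∑ j, M i j

/-- Burge matrices of size `n` (of all dimensions). -/
def BurgeMatrices (n : ℕ) : Set (Σ p : ℕ, Σ q : ℕ, Matrix (Fin p) (Fin q) ℕ) :=
  {M | IsBurge M.2.2 ∧ matSize M.2.2 = n}

/-- Binary Burge matrices of size `n`. -/
def BinaryBurgeMatrices (n : ℕ) : Set (Σ p : ℕ, Σ q : ℕ, Matrix (Fin p) (Fin q) ℕ) :=
  {M | M ∈ BurgeMatrices n ∧ ∀ i j, M.2.2 i j ≤ 1}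

/-- Burge matrices of size `n` whose every column sums to `1`. -/
def ColSumOneBurgeMatrices (n : ℕ) : Set (Σ p : ℕ, Σ q : ℕ, Matrix (Fin p) (Fin q) ℕ) :=
  {M | M ∈ BurgeMatrices n ∧ ∀ j, ∑ i, M.2.2 i j = 1}

/-- Burge words: pairs `(u,v) ∈ WI[n] × Cay[n]` with `Des(u) ⊆ Des(v)`. -/
def BurPairs (n : ℕ) : Set ((ℕ → ℕ) × (ℕ → ℕ)) :=
  {p | IsWI n p.1 ∧ IsCayley n p.2 ∧ desSet n p.1 ⊆ desSet n p.2}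

/-- Pairs `(u,v) ∈ WI[n] × Cay[n]` with `Des(u) ⊆ Des∘(v)`. -/
def BBurPairs (n : ℕ) : Set ((ℕ → ℕ) × (ℕ → ℕ)) :=
  {p | IsWI n p.1 ∧ IsCayley n p.2 ∧ desSet n p.1 ⊆ sdesSet n p.2}

/-- Pairs `(u,v) ∈ WI[n] × S_n` with `Des(u) ⊆ Des(v)`. -/
def PBurPairs (n : ℕ) : Set ((ℕ → ℕ) × (ℕ → ℕ)) :=
  {p | IsWI n p.1 ∧ IsPermWord n p.2 ∧ desSet n p.1 ⊆ desSet n p.2}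

/-- `Ω[n]`: pairs `(u,v) ∈ WI[n] × Cay[n]` with `Des(u) ⊇ Des(v)`. -/
def OmegaPairs (n : ℕ) : Set ((ℕ → ℕ) × (ℕ → ℕ)) :=
  {p | IsWI n p.1 ∧ IsCayley n p.2 ∧ desSet n p.2 ⊆ desSet n p.1}

/-- `v` lists the positions `1,…,n` in the order obtained by sorting the columns
`(x_i, i)` so that first components are weakly increasing, ties broken by strictly
decreasing second components.  For a permutation word `v` this says exactly that
`v = Γ(id, x)`, the bottom row of the Burge transpose of `(id, x)`. -/
def sortsColumns (n : ℕ) (x v : ℕ → ℕ) : Prop :=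
  ∀ i ∈ Finset.Icc 1 (n - 1),
    x (v i) < x (v (i + 1)) ∨ (x (v i) = x (v (i + 1)) ∧ v (i + 1) < v i)

/-- The Fishburn basis of a permutation word `v`:
`basis(v) = { x ∈ Cay[n] : Γ(id, x) = v }`. -/
def fishburnBasis (n : ℕ) (v : ℕ → ℕ) : Set (ℕ → ℕ) :=
  {x | IsCayley n x ∧ sortsColumns n x v}

/-- Stanley's `v`-compatibility condition:
`x(v(1)) ≤ ⋯ ≤ x(v(n))` with strict inequality at every ascent of `v`. -/
def VCompatible (n : ℕ) (v x : ℕ → ℕ) : Prop :=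
  (∀ i ∈ Finset.Icc 1 (n - 1), x (v i) ≤ x (v (i + 1))) ∧
    ∀ i ∈ Finset.Icc 1 (n - 1), v i < v (i + 1) → x (v i) < x (v (i + 1))

/-- A map `{1,…,n} → {1,…,m}`, encoded as a word. -/
def IsMapTo (n m : ℕ) (x : ℕ → ℕ) : Prop :=
  IsWord n x ∧ ∀ i ∈ Set.Icc 1 n, x i ∈ Set.Icc 1 m

/-- Weakly increasing maps `{1,…,n} → {1,…,m}`. -/
def WIgen (n m : ℕ) : Set (ℕ → ℕ) :=
  {u | IsMapTo n m u ∧ MonotoneOn u (Set.Icc 1 n)}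


/-! ### Auxiliary development for Theorem 6.5 -/

section Helpers

/-! #### The merge function `gOf` -/

def gOf (T : Finset ℕ) : ℕ → ℕ := fun m => m - (T ∩ Finset.Ico 1 m).card

lemma gOf_zero (T : Finset ℕ) : gOf T 0 = 0 := by simp [gOf]

lemma gOf_one (T : Finset ℕ) : gOf T 1 = 1 := by simp [gOf]

lemma card_inter_Ico_le (T : Finset ℕ) (m : ℕ) : (T ∩ Finset.Ico 1 m).card ≤ m - 1 :=
  le_trans (Finset.card_le_card Finset.inter_subset_right) (le_of_eq (Nat.card_Ico 1 m))

lemma inter_Ico_succ (T : Finset ℕ) {m : ℕ} (hm : 1 ≤ m) :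
    T ∩ Finset.Ico 1 (m + 1) =
      if m ∈ T then insert m (T ∩ Finset.Ico 1 m) else T ∩ Finset.Ico 1 m := by
  split_ifs with h
  · ext x
    simp only [Finset.mem_inter, Finset.mem_Ico, Finset.mem_insert]
    constructor
    · rintro ⟨hxT, hx1, hx2⟩
      by_cases hxm : x = m
      · exact Or.inl hxm
      · exact Or.inr ⟨hxT, hx1, by omega⟩
    · rintro (rfl | ⟨hxT, hx1, hx2⟩)
      · exact ⟨h, hm, by omega⟩
      · exact ⟨hxT, hx1, by omega⟩
  · ext x
    simp only [Finset.mem_inter, Finset.mem_Ico]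
    constructor
    · rintro ⟨hxT, hx1, hx2⟩
      refine ⟨hxT, hx1, ?_⟩
      by_cases hxm : x = m
      · exact absurd (hxm ▸ hxT) h
      · omega
    · rintro ⟨hxT, hx1, hx2⟩; exact ⟨hxT, hx1, by omega⟩

lemma gOf_succ (T : Finset ℕ) {m : ℕ} (hm : 1 ≤ m) :
    gOf T (m + 1) = if m ∈ T then gOf T m else gOf T m + 1 := by
  have hle := card_inter_Ico_le T m
  have h2 := inter_Ico_succ T hm
  simp only [gOf]
  split_ifs with h
  · rw [h2, if_pos h, Finset.card_insert_of_notMem (by simp)]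
    omega
  · rw [h2, if_neg h]
    omega

lemma gOf_le_succ' (T : Finset ℕ) (m : ℕ) :
    gOf T m ≤ gOf T (m + 1) ∧ gOf T (m + 1) ≤ gOf T m + 1 := by
  rcases Nat.eq_zero_or_pos m with rfl | hm
  · simp [gOf_zero, gOf_one]
  · rw [gOf_succ T hm]; split_ifs <;> omega

lemma gOf_mono (T : Finset ℕ) : Monotone (gOf T) :=
  monotone_nat_of_le_succ fun m => (gOf_le_succ' T m).1

lemma gOf_succ_le (T : Finset ℕ) (m : ℕ) : gOf T (m + 1) ≤ gOf T m + 1 :=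
  (gOf_le_succ' T m).2

lemma gOf_pos (T : Finset ℕ) {m : ℕ} (hm : 1 ≤ m) : 1 ≤ gOf T m :=
  le_trans (le_of_eq (gOf_one T).symm) (gOf_mono T hm)

lemma mem_of_gOf_eq (T : Finset ℕ) {a b k : ℕ} (ha : 1 ≤ a) (h1 : a ≤ k) (h2 : k < b)
    (h : gOf T a = gOf T b) : k ∈ T := by
  have hk : 1 ≤ k := le_trans ha h1
  have e1 : gOf T a ≤ gOf T k := gOf_mono T h1
  have e2 : gOf T (k + 1) ≤ gOf T b := gOf_mono T h2
  have e3 := gOf_succ T hk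
  by_contra hkT
  rw [if_neg hkT] at e3
  omega

lemma gOf_top {n : ℕ} (T : Finset ℕ) (hT : T ⊆ Finset.Icc 1 (n - 1)) :
    gOf T n = n - T.card := by
  rcases Nat.eq_zero_or_pos n with rfl | hn
  · have hT0 : T = ∅ := Finset.subset_empty.mp (by
      intro x hx
      have := hT hx
      rw [Finset.mem_Icc] at this
      omega)
    simp [hT0, gOf_zero]
  · have hint : T ∩ Finset.Ico 1 n = T := Finset.inter_eq_left.mpr (fun x hx => by
      have := hT hx
      rw [Finset.mem_Icc] at this
      rw [Finset.mem_Ico]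
      omega)
    simp only [gOf]
    rw [hint]

lemma gOf_ivt (T : Finset ℕ) {c m : ℕ} (hc : 1 ≤ c) (hcm : c ≤ gOf T m) :
    ∃ a, 1 ≤ a ∧ a ≤ m ∧ gOf T a = c := by
  induction m with
  | zero => rw [gOf_zero] at hcm; omega
  | succ m ih =>
    by_cases h : c ≤ gOf T m
    · obtain ⟨a, h1, h2, h3⟩ := ih h
      exact ⟨a, h1, by omega, h3⟩
    · have := gOf_succ_le T m
      exact ⟨m + 1, by omega, le_refl _, by omega⟩

/-! #### permWord lemmas -/

lemma permWord_apply' {n : ℕ} (σ : Equiv.Perm (Fin n)) (j : Fin n) :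
    permWord n σ ((j : ℕ) + 1) = (σ j : ℕ) + 1 := by
  have h2 : (j : ℕ) + 1 ≤ n := j.isLt
  rw [permWord, dif_pos ⟨by omega, h2⟩]
  have he : (⟨(j : ℕ) + 1 - 1, by omega⟩ : Fin n) = j := Fin.ext (by simp)
  rw [he]

lemma permWord_zero {n : ℕ} (σ : Equiv.Perm (Fin n)) {i : ℕ} (h : ¬(1 ≤ i ∧ i ≤ n)) :
    permWord n σ i = 0 := by rw [permWord, dif_neg h]

lemma exists_fin_succ_eq {n : ℕ} {i : ℕ} (h1 : 1 ≤ i) (h2 : i ≤ n) :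
    ∃ j : Fin n, i = (j : ℕ) + 1 :=
  ⟨⟨i - 1, by omega⟩, by show i = i - 1 + 1; omega⟩

lemma permWord_bounds {n : ℕ} (σ : Equiv.Perm (Fin n)) {i : ℕ} (h1 : 1 ≤ i) (h2 : i ≤ n) :
    1 ≤ permWord n σ i ∧ permWord n σ i ≤ n := by
  obtain ⟨j, rfl⟩ := exists_fin_succ_eq h1 h2
  rw [permWord_apply' σ j]
  have := (σ j).isLt
  omega

lemma permWord_inv_permWord {n : ℕ} (σ : Equiv.Perm (Fin n)) {i : ℕ} (h1 : 1 ≤ i) (h2 : i ≤ n) :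
    permWord n σ⁻¹ (permWord n σ i) = i := by
  obtain ⟨j, rfl⟩ := exists_fin_succ_eq h1 h2
  rw [permWord_apply' σ j, permWord_apply' σ⁻¹ (σ j), Equiv.Perm.inv_def, Equiv.symm_apply_apply]

lemma permWord_permWord_inv {n : ℕ} (σ : Equiv.Perm (Fin n)) {m : ℕ} (h1 : 1 ≤ m) (h2 : m ≤ n) :
    permWord n σ (permWord n σ⁻¹ m) = m := by
  have := permWord_inv_permWord σ⁻¹ h1 h2
  rwa [inv_inv] at this

lemma permWord_injOn {n : ℕ} (σ : Equiv.Perm (Fin n)) {i j : ℕ} (hi1 : 1 ≤ i) (hi2 : i ≤ n)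
    (hj1 : 1 ≤ j) (hj2 : j ≤ n) (h : permWord n σ i = permWord n σ j) : i = j := by
  have e1 := permWord_inv_permWord σ hi1 hi2
  have e2 := permWord_inv_permWord σ hj1 hj2
  rw [← e1, ← e2, h]

lemma permWord_inj {n : ℕ} {σ σ' : Equiv.Perm (Fin n)} (h : permWord n σ = permWord n σ') :
    σ = σ' := by
  apply Equiv.ext
  intro j
  have hj := congrFun h ((j : ℕ) + 1)
  rw [permWord_apply' σ j, permWord_apply' σ' j] at hj
  exact Fin.ext (by omega)

lemma permWord_image {n : ℕ} (σ : Equiv.Perm (Fin n)) :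
    permWord n σ '' Set.Icc 1 n = Set.Icc 1 n := by
  ext m
  constructor
  · rintro ⟨i, hi, rfl⟩
    rw [Set.mem_Icc] at hi ⊢
    exact permWord_bounds σ hi.1 hi.2
  · intro hm
    rw [Set.mem_Icc] at hm
    exact ⟨permWord n σ⁻¹ m, Set.mem_Icc.mpr (permWord_bounds σ⁻¹ hm.1 hm.2),
      permWord_permWord_inv σ hm.1 hm.2⟩

/-! #### descent set membership, chains -/

lemma mem_desSet {n : ℕ} {v : ℕ → ℕ} {i : ℕ} :
    i ∈ desSet n v ↔ (1 ≤ i ∧ i ≤ n - 1) ∧ v (i + 1) ≤ v i := by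
  rw [desSet, Finset.mem_filter, Finset.mem_Icc]

lemma mem_sdesSet {n : ℕ} {v : ℕ → ℕ} {i : ℕ} :
    i ∈ sdesSet n v ↔ (1 ≤ i ∧ i ≤ n - 1) ∧ v (i + 1) < v i := by
  rw [sdesSet, Finset.mem_filter, Finset.mem_Icc]

lemma mem_ascSet {n : ℕ} {v : ℕ → ℕ} {i : ℕ} :
    i ∈ ascSet n v ↔ (1 ≤ i ∧ i ≤ n - 1) ∧ v i ≤ v (i + 1) := by
  rw [ascSet, Finset.mem_filter, Finset.mem_Icc]

lemma chain_desc {p : ℕ → ℕ} :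
    ∀ b {a : ℕ}, a < b → (∀ k, a ≤ k → k < b → p (k + 1) < p k) → p b < p a := by
  intro b
  induction b with
  | zero => intro a h _; exact absurd h (Nat.not_lt_zero a)
  | succ b ih =>
    intro a hab h
    rcases Nat.lt_succ_iff_lt_or_eq.mp hab with h' | rfl
    · exact lt_trans (h b (by omega) (by omega)) (ih h' fun k hk1 hk2 => h k hk1 (by omega))
    · exact h a le_rfl (by omega)

lemma chain_asc {p : ℕ → ℕ} :
    ∀ b {a : ℕ}, a < b → (∀ k, a ≤ k → k < b → p k < p (k + 1)) → p a < p b := by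
  intro b
  induction b with
  | zero => intro a h _; exact absurd h (Nat.not_lt_zero a)
  | succ b ih =>
    intro a hab h
    rcases Nat.lt_succ_iff_lt_or_eq.mp hab with h' | rfl
    · exact lt_trans (ih h' fun k hk1 hk2 => h k hk1 (by omega)) (h b (by omega) (by omega))
    · exact h a le_rfl (by omega)

/-! #### vOf and uOf -/

def vOf (n : ℕ) (σ : Equiv.Perm (Fin n)) (T : Finset ℕ) : ℕ → ℕ :=
  fun i => gOf T (permWord n σ i)

def uOf (n : ℕ) (S : Finset ℕ) : ℕ → ℕ :=
  fun i => if 1 ≤ i ∧ i ≤ n then gOf S i else 0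

lemma pos_lt_of_gOf_eq {n : ℕ} {σ : Equiv.Perm (Fin n)} {T : Finset ℕ}
    (hT : T ⊆ desSet n (permWord n σ⁻¹)) {a b : ℕ} (ha : 1 ≤ a) (hab : a < b) (hb : b ≤ n)
    (h : gOf T a = gOf T b) : permWord n σ⁻¹ b < permWord n σ⁻¹ a := by
  apply chain_desc b hab
  intro k hk1 hk2
  have hkT : k ∈ T := mem_of_gOf_eq T ha hk1 hk2 h
  have hdes := mem_desSet.mp (hT hkT)
  have hne : permWord n σ⁻¹ (k + 1) ≠ permWord n σ⁻¹ k := by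
    intro he
    have := permWord_injOn σ⁻¹ (i := k + 1) (j := k) (by omega) (by omega) (by omega) (by omega) he
    omega
  exact lt_of_le_of_ne hdes.2 hne

lemma pos_gt_of_gOf_eq {n : ℕ} {σ : Equiv.Perm (Fin n)} {T : Finset ℕ}
    (hT : T ⊆ ascSet n (permWord n σ⁻¹)) {a b : ℕ} (ha : 1 ≤ a) (hab : a < b) (hb : b ≤ n)
    (h : gOf T a = gOf T b) : permWord n σ⁻¹ a < permWord n σ⁻¹ b := by
  apply chain_asc b hab
  intro k hk1 hk2
  have hkT : k ∈ T := mem_of_gOf_eq T ha hk1 hk2 h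
  have hasc := mem_ascSet.mp (hT hkT)
  have hne : permWord n σ⁻¹ k ≠ permWord n σ⁻¹ (k + 1) := by
    intro he
    have := permWord_injOn σ⁻¹ (i := k) (j := k + 1) (by omega) (by omega) (by omega) (by omega) he
    omega
  exact lt_of_le_of_ne hasc.2 hne

lemma desSet_vOf {n : ℕ} {σ : Equiv.Perm (Fin n)} {T : Finset ℕ}
    (hT : T ⊆ desSet n (permWord n σ⁻¹)) :
    desSet n (vOf n σ T) = desSet n (permWord n σ) := by
  ext i
  rw [mem_desSet, mem_desSet]
  constructor
  · rintro ⟨hi, hvi⟩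
    refine ⟨hi, ?_⟩
    by_contra hw
    push_neg at hw
    have hb1 := permWord_bounds σ (i := i) hi.1 (by omega)
    have hb2 := permWord_bounds σ (i := i + 1) (by omega) (by omega)
    have heq : gOf T (permWord n σ i) = gOf T (permWord n σ (i + 1)) :=
      le_antisymm (gOf_mono T (le_of_lt hw)) hvi
    have hlt := pos_lt_of_gOf_eq hT hb1.1 hw hb2.2 heq
    rw [permWord_inv_permWord σ hi.1 (by omega),
        permWord_inv_permWord σ (i := i + 1) (by omega) (by omega)] at hlt
    omega
  · rintro ⟨hi, hw⟩
    exact ⟨hi, gOf_mono T hw⟩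

lemma sdesSet_vOf {n : ℕ} {σ : Equiv.Perm (Fin n)} {T : Finset ℕ}
    (hT : T ⊆ ascSet n (permWord n σ⁻¹)) :
    sdesSet n (vOf n σ T) = desSet n (permWord n σ) := by
  ext i
  rw [mem_sdesSet, mem_desSet]
  constructor
  · rintro ⟨hi, hvi⟩
    refine ⟨hi, ?_⟩
    by_contra hw
    push_neg at hw
    exact absurd (gOf_mono T (le_of_lt hw)) (not_le.mpr hvi)
  · rintro ⟨hi, hw⟩
    refine ⟨hi, ?_⟩
    have hb1 := permWord_bounds σ (i := i) hi.1 (by omega)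
    have hb2 := permWord_bounds σ (i := i + 1) (by omega) (by omega)
    have hne : permWord n σ (i + 1) ≠ permWord n σ i := by
      intro he
      have := permWord_injOn σ (i := i + 1) (j := i) (by omega) (by omega) (by omega) (by omega) he
      omega
    have hlt : permWord n σ (i + 1) < permWord n σ i := lt_of_le_of_ne hw hne
    by_contra hv
    push_neg at hv
    have heq : gOf T (permWord n σ (i + 1)) = gOf T (permWord n σ i) :=
      le_antisymm (gOf_mono T hw) hv
    have := pos_gt_of_gOf_eq hT hb2.1 hlt hb1.2 heq
    rw [permWord_inv_permWord σ hi.1 (by omega),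
        permWord_inv_permWord σ (i := i + 1) (by omega) (by omega)] at this
    omega

/-! #### images and wmax -/

lemma gOf_image {n : ℕ} (T : Finset ℕ) (hT : T ⊆ Finset.Icc 1 (n - 1)) :
    gOf T '' Set.Icc 1 n = Set.Icc 1 (n - T.card) := by
  ext c
  simp only [Set.mem_image, Set.mem_Icc]
  constructor
  · rintro ⟨a, ⟨h1, h2⟩, rfl⟩
    exact ⟨gOf_pos T h1, by rw [← gOf_top T hT]; exact gOf_mono T h2⟩
  · rintro ⟨h1, h2⟩
    obtain ⟨a, ha1, ha2, ha3⟩ := gOf_ivt T h1 (by rw [gOf_top T hT]; exact h2)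
    exact ⟨a, ⟨ha1, ha2⟩, ha3⟩

lemma uOf_image {n : ℕ} {S : Finset ℕ} (hS : S ⊆ Finset.Icc 1 (n - 1)) :
    uOf n S '' Set.Icc 1 n = Set.Icc 1 (n - S.card) := by
  have heq : Set.EqOn (uOf n S) (gOf S) (Set.Icc 1 n) := fun i hi => by
    simp only [uOf]
    rw [if_pos (Set.mem_Icc.mp hi)]
  rw [Set.image_congr heq, gOf_image S hS]

lemma uOf_isWI {n : ℕ} {S : Finset ℕ} (hS : S ⊆ Finset.Icc 1 (n - 1)) : IsWI n (uOf n S) := by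
  refine ⟨⟨?_, n - S.card, uOf_image hS⟩, ?_⟩
  · intro i hi
    simp only [uOf]
    rw [if_neg (by rw [Set.mem_Icc] at hi; exact hi)]
  · intro i hi j hj hij
    simp only [uOf]
    rw [if_pos (Set.mem_Icc.mp hi), if_pos (Set.mem_Icc.mp hj)]
    exact gOf_mono S hij

lemma desSet_uOf {n : ℕ} {S : Finset ℕ} (hS : S ⊆ Finset.Icc 1 (n - 1)) :
    desSet n (uOf n S) = S := by
  ext i
  rw [mem_desSet]
  constructor
  · rintro ⟨⟨h1, h2⟩, hle⟩
    simp only [uOf] at hle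
    rw [if_pos ⟨by omega, by omega⟩, if_pos ⟨h1, by omega⟩] at hle
    by_contra hiS
    rw [gOf_succ S h1, if_neg hiS] at hle
    omega
  · intro hiS
    have hb := Finset.mem_Icc.mp (hS hiS)
    refine ⟨hb, ?_⟩
    simp only [uOf]
    rw [if_pos ⟨by omega, by omega⟩, if_pos ⟨by omega, by omega⟩, gOf_succ S hb.1, if_pos hiS]

lemma wmax_eq {n k : ℕ} {v : ℕ → ℕ} (h : v '' Set.Icc 1 n = Set.Icc 1 k) : wmax n v = k := by
  apply le_antisymm
  · apply Finset.sup_le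
    intro i hi
    rw [Finset.mem_Icc] at hi
    have : v i ∈ Set.Icc 1 k := h ▸ ⟨i, Set.mem_Icc.mpr hi, rfl⟩
    exact (Set.mem_Icc.mp this).2
  · rcases Nat.eq_zero_or_pos k with rfl | hk
    · exact Nat.zero_le _
    · have hmem : k ∈ Set.Icc 1 k := Set.mem_Icc.mpr ⟨hk, le_rfl⟩
      rw [← h] at hmem
      obtain ⟨i, hi, hvi⟩ := hmem
      rw [Set.mem_Icc] at hi
      calc k = v i := hvi.symm
      _ ≤ (Finset.Icc 1 n).sup v := Finset.le_sup (Finset.mem_Icc.mpr hi)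

lemma vOf_image {n : ℕ} (σ : Equiv.Perm (Fin n)) {T : Finset ℕ}
    (hT : T ⊆ Finset.Icc 1 (n - 1)) :
    vOf n σ T '' Set.Icc 1 n = Set.Icc 1 (n - T.card) := by
  have : vOf n σ T '' Set.Icc 1 n = gOf T '' (permWord n σ '' Set.Icc 1 n) := by
    rw [← Set.image_comp]
    rfl
  rw [this, permWord_image, gOf_image T hT]

lemma vOf_isCayley {n : ℕ} (σ : Equiv.Perm (Fin n)) {T : Finset ℕ}
    (hT : T ⊆ Finset.Icc 1 (n - 1)) : IsCayley n (vOf n σ T) := by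
  refine ⟨?_, n - T.card, vOf_image σ hT⟩
  intro i hi
  simp only [vOf]
  rw [permWord_zero σ (by rw [Set.mem_Icc] at hi; exact hi), gOf_zero]

/-! #### rank/uniqueness lemmas -/

lemma card_le_filter {n : ℕ} (σ : Equiv.Perm (Fin n)) {i : ℕ} (h1 : 1 ≤ i) (h2 : i ≤ n) :
    ((Finset.Icc 1 n).filter fun j => permWord n σ j ≤ permWord n σ i).card
      = permWord n σ i := by
  have hbi := permWord_bounds σ h1 h2
  have hc : (Finset.Icc 1 (permWord n σ i)).card = permWord n σ i := by
    rw [Nat.card_Icc]; omega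
  conv_rhs => rw [← hc]
  apply Finset.card_bij' (fun j _ => permWord n σ j) (fun m _ => permWord n σ⁻¹ m)
  · intro a ha
    rw [Finset.mem_filter, Finset.mem_Icc] at ha
    rw [Finset.mem_Icc]
    exact ⟨(permWord_bounds σ ha.1.1 ha.1.2).1, ha.2⟩
  · intro a ha
    rw [Finset.mem_Icc] at ha
    have ha2 : a ≤ n := le_trans ha.2 hbi.2
    rw [Finset.mem_filter, Finset.mem_Icc]
    refine ⟨Set.mem_Icc.mp (Set.mem_Icc.mpr (permWord_bounds σ⁻¹ ha.1 ha2)), ?_⟩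
    rw [permWord_permWord_inv σ ha.1 ha2]
    exact ha.2
  · intro a ha
    rw [Finset.mem_filter, Finset.mem_Icc] at ha
    exact permWord_inv_permWord σ ha.1.1 ha.1.2
  · intro a ha
    rw [Finset.mem_Icc] at ha
    exact permWord_permWord_inv σ ha.1 (le_trans ha.2 hbi.2)

lemma wle_iff_weak {n : ℕ} {σ : Equiv.Perm (Fin n)} {T : Finset ℕ}
    (hT : T ⊆ desSet n (permWord n σ⁻¹)) {i j : ℕ}
    (hi1 : 1 ≤ i) (hi2 : i ≤ n) (hj1 : 1 ≤ j) (hj2 : j ≤ n) :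
    permWord n σ j ≤ permWord n σ i ↔
      (vOf n σ T j < vOf n σ T i ∨ (vOf n σ T j = vOf n σ T i ∧ i ≤ j)) := by
  have hbi := permWord_bounds σ hi1 hi2
  have hbj := permWord_bounds σ hj1 hj2
  constructor
  · intro hle
    rcases lt_or_eq_of_le (gOf_mono T hle) with hlt | heq
    · exact Or.inl hlt
    · refine Or.inr ⟨heq, ?_⟩
      rcases lt_or_eq_of_le hle with hlt | heqw
      · have := pos_lt_of_gOf_eq hT hbj.1 hlt hbi.2 heq
        rw [permWord_inv_permWord σ hi1 hi2, permWord_inv_permWord σ hj1 hj2] at this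
        omega
      · have := permWord_injOn σ hj1 hj2 hi1 hi2 heqw
        omega
  · intro h
    by_contra hle
    push_neg at hle
    rcases h with hlt | ⟨heq, hij⟩
    · exact absurd (gOf_mono T hle.le) (not_le.mpr hlt)
    · have := pos_lt_of_gOf_eq hT hbi.1 hle hbj.2 heq.symm
      rw [permWord_inv_permWord σ hi1 hi2, permWord_inv_permWord σ hj1 hj2] at this
      omega

lemma wle_iff_strict {n : ℕ} {σ : Equiv.Perm (Fin n)} {T : Finset ℕ}
    (hT : T ⊆ ascSet n (permWord n σ⁻¹)) {i j : ℕ}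
    (hi1 : 1 ≤ i) (hi2 : i ≤ n) (hj1 : 1 ≤ j) (hj2 : j ≤ n) :
    permWord n σ j ≤ permWord n σ i ↔
      (vOf n σ T j < vOf n σ T i ∨ (vOf n σ T j = vOf n σ T i ∧ j ≤ i)) := by
  have hbi := permWord_bounds σ hi1 hi2
  have hbj := permWord_bounds σ hj1 hj2
  constructor
  · intro hle
    rcases lt_or_eq_of_le (gOf_mono T hle) with hlt | heq
    · exact Or.inl hlt
    · refine Or.inr ⟨heq, ?_⟩
      rcases lt_or_eq_of_le hle with hlt | heqw
      · have := pos_gt_of_gOf_eq hT hbj.1 hlt hbi.2 heq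
        rw [permWord_inv_permWord σ hi1 hi2, permWord_inv_permWord σ hj1 hj2] at this
        omega
      · have := permWord_injOn σ hj1 hj2 hi1 hi2 heqw
        omega
  · intro h
    by_contra hle
    push_neg at hle
    rcases h with hlt | ⟨heq, hij⟩
    · exact absurd (gOf_mono T hle.le) (not_le.mpr hlt)
    · have := pos_gt_of_gOf_eq hT hbi.1 hle hbj.2 heq.symm
      rw [permWord_inv_permWord σ hi1 hi2, permWord_inv_permWord σ hj1 hj2] at this
      omega

lemma gOf_mem_iff (T : Finset ℕ) {m : ℕ} (hm : 1 ≤ m) :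
    m ∈ T ↔ gOf T (m + 1) = gOf T m := by
  rw [gOf_succ T hm]
  split_ifs with h
  · simp [h]
  · simp only [h, false_iff]
    omega

lemma vOf_pos_apply {n : ℕ} (σ : Equiv.Perm (Fin n)) (T : Finset ℕ) {m : ℕ}
    (h1 : 1 ≤ m) (h2 : m ≤ n) :
    vOf n σ T (permWord n σ⁻¹ m) = gOf T m := by
  simp only [vOf]
  rw [permWord_permWord_inv σ h1 h2]

lemma vOf_inj_weak {n : ℕ} {σ σ' : Equiv.Perm (Fin n)} {T T' : Finset ℕ}
    (hT : T ⊆ desSet n (permWord n σ⁻¹)) (hT' : T' ⊆ desSet n (permWord n σ'⁻¹))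
    (h : vOf n σ T = vOf n σ' T') : σ = σ' ∧ T = T' := by
  have hw : permWord n σ = permWord n σ' := by
    funext i
    by_cases hi : 1 ≤ i ∧ i ≤ n
    · rw [← card_le_filter σ hi.1 hi.2, ← card_le_filter σ' hi.1 hi.2]
      congr 1
      apply Finset.filter_congr
      intro j hj
      rw [Finset.mem_Icc] at hj
      rw [wle_iff_weak hT hi.1 hi.2 hj.1 hj.2, wle_iff_weak hT' hi.1 hi.2 hj.1 hj.2, h]
    · rw [permWord_zero σ hi, permWord_zero σ' hi]
  have hσ : σ = σ' := permWord_inj hw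
  subst hσ
  refine ⟨rfl, ?_⟩
  ext m
  by_cases hm : 1 ≤ m ∧ m ≤ n - 1
  · rw [gOf_mem_iff T hm.1, gOf_mem_iff T' hm.1,
      ← vOf_pos_apply σ T hm.1 (by omega), ← vOf_pos_apply σ T (m := m + 1) (by omega) (by omega),
      ← vOf_pos_apply σ T' hm.1 (by omega),
      ← vOf_pos_apply σ T' (m := m + 1) (by omega) (by omega), h]
  · constructor
    · intro hmT
      exact absurd (mem_desSet.mp (hT hmT)).1 hm
    · intro hmT
      exact absurd (mem_desSet.mp (hT' hmT)).1 hm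

lemma vOf_inj_strict {n : ℕ} {σ σ' : Equiv.Perm (Fin n)} {T T' : Finset ℕ}
    (hT : T ⊆ ascSet n (permWord n σ⁻¹)) (hT' : T' ⊆ ascSet n (permWord n σ'⁻¹))
    (h : vOf n σ T = vOf n σ' T') : σ = σ' ∧ T = T' := by
  have hw : permWord n σ = permWord n σ' := by
    funext i
    by_cases hi : 1 ≤ i ∧ i ≤ n
    · rw [← card_le_filter σ hi.1 hi.2, ← card_le_filter σ' hi.1 hi.2]
      congr 1
      apply Finset.filter_congr
      intro j hj
      rw [Finset.mem_Icc] at hj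
      rw [wle_iff_strict hT hi.1 hi.2 hj.1 hj.2, wle_iff_strict hT' hi.1 hi.2 hj.1 hj.2, h]
    · rw [permWord_zero σ hi, permWord_zero σ' hi]
  have hσ : σ = σ' := permWord_inj hw
  subst hσ
  refine ⟨rfl, ?_⟩
  ext m
  by_cases hm : 1 ≤ m ∧ m ≤ n - 1
  · rw [gOf_mem_iff T hm.1, gOf_mem_iff T' hm.1,
      ← vOf_pos_apply σ T hm.1 (by omega), ← vOf_pos_apply σ T (m := m + 1) (by omega) (by omega),
      ← vOf_pos_apply σ T' hm.1 (by omega),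
      ← vOf_pos_apply σ T' (m := m + 1) (by omega) (by omega), h]
  · constructor
    · intro hmT
      exact absurd (mem_ascSet.mp (hT hmT)).1 hm
    · intro hmT
      exact absurd (mem_ascSet.mp (hT' hmT)).1 hm

lemma uOf_eq_of_isWI {n : ℕ} {u : ℕ → ℕ} (h : IsWI n u) : uOf n (desSet n u) = u := by
  obtain ⟨⟨hword, k, himg⟩, hmono⟩ := h
  have himg' : ∀ m, 1 ≤ m → m ≤ n → 1 ≤ u m ∧ u m ≤ k := by
    intro m hm1 hm2
    have : u m ∈ Set.Icc 1 k := himg ▸ Set.mem_image_of_mem u (Set.mem_Icc.mpr ⟨hm1, hm2⟩)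
    exact Set.mem_Icc.mp this
  have hval : ∀ m, 1 ≤ m → m ≤ n → u m = gOf (desSet n u) m := by
    intro m hm1
    induction m, hm1 using Nat.le_induction with
    | base =>
      intro hn
      have h1 := himg' 1 le_rfl hn
      rw [gOf_one]
      by_contra hne
      have h2 : (1 : ℕ) ∈ Set.Icc 1 k := Set.mem_Icc.mpr ⟨le_rfl, by omega⟩
      rw [← himg] at h2
      obtain ⟨l, hl, hul⟩ := h2
      have := hmono (Set.mem_Icc.mpr ⟨le_rfl, hn⟩) hl (Set.mem_Icc.mp hl).1
      omega
    | succ m hm ih =>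
      intro hmn
      have hihm := ih (by omega)
      have hm1 := himg' m hm (by omega)
      have hm2 := himg' (m + 1) (by omega) hmn
      have hmono' := hmono (Set.mem_Icc.mpr ⟨hm, by omega⟩)
        (Set.mem_Icc.mpr ⟨by omega, hmn⟩) (by omega)
      have hstep : u (m + 1) ≤ u m + 1 := by
        by_contra hgt
        push_neg at hgt
        have h2 : u m + 1 ∈ Set.Icc 1 k := Set.mem_Icc.mpr ⟨by omega, by omega⟩
        rw [← himg] at h2
        obtain ⟨l, hl, hul⟩ := h2
        have hlIcc := Set.mem_Icc.mp hl
        have hlm : m < l := by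
          by_contra hle
          push_neg at hle
          have := hmono hl (Set.mem_Icc.mpr ⟨hm, by omega⟩) hle
          omega
        have := hmono (Set.mem_Icc.mpr ⟨by omega, hmn⟩) hl (by omega)
        omega
      rw [gOf_succ (desSet n u) hm, ← hihm]
      by_cases hmd : m ∈ desSet n u
      · rw [if_pos hmd]
        have := (mem_desSet.mp hmd).2
        omega
      · rw [if_neg hmd]
        have : ¬ u (m + 1) ≤ u m := fun hle =>
          hmd (mem_desSet.mpr ⟨⟨hm, by omega⟩, hle⟩)
        omega
  funext i
  by_cases hi : 1 ≤ i ∧ i ≤ n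
  · simp only [uOf]
    rw [if_pos hi, ← hval i hi.1 hi.2]
  · simp only [uOf]
    rw [if_neg hi]
    exact (hword i (fun hmem => hi (Set.mem_Icc.mp hmem))).symm

/-! #### standardization -/

def stdD (n : ℕ) (v : ℕ → ℕ) : ℕ → ℕ := fun i =>
  if 1 ≤ i ∧ i ≤ n then
    ((Finset.Icc 1 n).filter fun j => v j < v i).card
      + ((Finset.Icc i n).filter fun j => v j = v i).card
  else 0

def stdI (n : ℕ) (v : ℕ → ℕ) : ℕ → ℕ := fun i =>
  if 1 ≤ i ∧ i ≤ n then
    ((Finset.Icc 1 n).filter fun j => v j < v i).card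
      + ((Finset.Icc 1 i).filter fun j => v j = v i).card
  else 0

lemma stdD_pos {n : ℕ} {v : ℕ → ℕ} {i : ℕ} (hi : 1 ≤ i ∧ i ≤ n) : 1 ≤ stdD n v i := by
  simp only [stdD, if_pos hi]
  have hmem : i ∈ (Finset.Icc i n).filter fun j => v j = v i :=
    Finset.mem_filter.mpr ⟨Finset.mem_Icc.mpr ⟨le_rfl, hi.2⟩, rfl⟩
  have := Finset.card_pos.mpr ⟨i, hmem⟩
  omega

lemma stdI_pos {n : ℕ} {v : ℕ → ℕ} {i : ℕ} (hi : 1 ≤ i ∧ i ≤ n) : 1 ≤ stdI n v i := by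
  simp only [stdI, if_pos hi]
  have hmem : i ∈ (Finset.Icc 1 i).filter fun j => v j = v i :=
    Finset.mem_filter.mpr ⟨Finset.mem_Icc.mpr ⟨hi.1, le_rfl⟩, rfl⟩
  have := Finset.card_pos.mpr ⟨i, hmem⟩
  omega

lemma stdD_le {n : ℕ} {v : ℕ → ℕ} {i : ℕ} (hi : 1 ≤ i ∧ i ≤ n) : stdD n v i ≤ n := by
  simp only [stdD, if_pos hi]
  have hsub : (Finset.Icc i n).filter (fun j => v j = v i)
      ⊆ (Finset.Icc 1 n).filter fun j => v j = v i := by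
    intro x hx
    rw [Finset.mem_filter, Finset.mem_Icc] at hx ⊢
    exact ⟨⟨by omega, hx.1.2⟩, hx.2⟩
  have hdisj : Disjoint ((Finset.Icc 1 n).filter fun j => v j < v i)
      ((Finset.Icc 1 n).filter fun j => v j = v i) := by
    apply Finset.disjoint_left.mpr
    intro a h1 h2
    rw [Finset.mem_filter] at h1 h2
    omega
  have h1 : (((Finset.Icc 1 n).filter fun j => v j < v i)
      ∪ ((Finset.Icc 1 n).filter fun j => v j = v i)).card
      = ((Finset.Icc 1 n).filter fun j => v j < v i).card
        + ((Finset.Icc 1 n).filter fun j => v j = v i).card :=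
    Finset.card_union_of_disjoint hdisj
  have h2 : (((Finset.Icc 1 n).filter fun j => v j < v i)
      ∪ ((Finset.Icc 1 n).filter fun j => v j = v i)).card ≤ (Finset.Icc 1 n).card :=
    Finset.card_le_card (Finset.union_subset (Finset.filter_subset _ _) (Finset.filter_subset _ _))
  have h3 := Finset.card_le_card hsub
  have h4 : (Finset.Icc 1 n).card = n := by rw [Nat.card_Icc]; omega
  omega

lemma stdI_le {n : ℕ} {v : ℕ → ℕ} {i : ℕ} (hi : 1 ≤ i ∧ i ≤ n) : stdI n v i ≤ n := by
  simp only [stdI, if_pos hi]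
  have hsub : (Finset.Icc 1 i).filter (fun j => v j = v i)
      ⊆ (Finset.Icc 1 n).filter fun j => v j = v i := by
    intro x hx
    rw [Finset.mem_filter, Finset.mem_Icc] at hx ⊢
    exact ⟨⟨hx.1.1, by omega⟩, hx.2⟩
  have hdisj : Disjoint ((Finset.Icc 1 n).filter fun j => v j < v i)
      ((Finset.Icc 1 n).filter fun j => v j = v i) := by
    apply Finset.disjoint_left.mpr
    intro a h1 h2
    rw [Finset.mem_filter] at h1 h2
    omega
  have h1 : (((Finset.Icc 1 n).filter fun j => v j < v i)
      ∪ ((Finset.Icc 1 n).filter fun j => v j = v i)).card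
      = ((Finset.Icc 1 n).filter fun j => v j < v i).card
        + ((Finset.Icc 1 n).filter fun j => v j = v i).card :=
    Finset.card_union_of_disjoint hdisj
  have h2 : (((Finset.Icc 1 n).filter fun j => v j < v i)
      ∪ ((Finset.Icc 1 n).filter fun j => v j = v i)).card ≤ (Finset.Icc 1 n).card :=
    Finset.card_le_card (Finset.union_subset (Finset.filter_subset _ _) (Finset.filter_subset _ _))
  have h3 := Finset.card_le_card hsub
  have h4 : (Finset.Icc 1 n).card = n := by rw [Nat.card_Icc]; omega
  omega

lemma stdD_lt_of_lt {n : ℕ} {v : ℕ → ℕ} {i j : ℕ} (hi : 1 ≤ i ∧ i ≤ n) (hj : 1 ≤ j ∧ j ≤ n)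
    (h : v i < v j) : stdD n v i < stdD n v j := by
  simp only [stdD, if_pos hi, if_pos hj]
  have hsub : (((Finset.Icc 1 n).filter fun l => v l < v i)
      ∪ ((Finset.Icc i n).filter fun l => v l = v i))
      ⊆ (Finset.Icc 1 n).filter fun l => v l < v j := by
    intro x hx
    rcases Finset.mem_union.mp hx with hx | hx
    · rw [Finset.mem_filter] at hx ⊢
      exact ⟨hx.1, by omega⟩
    · rw [Finset.mem_filter, Finset.mem_Icc] at hx ⊢
      exact ⟨⟨by omega, hx.1.2⟩, by omega⟩
  have hdisj : Disjoint ((Finset.Icc 1 n).filter fun l => v l < v i)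
      ((Finset.Icc i n).filter fun l => v l = v i) := by
    apply Finset.disjoint_left.mpr
    intro a h1 h2
    rw [Finset.mem_filter] at h1 h2
    omega
  have h1 := Finset.card_union_of_disjoint hdisj
  have h2 := Finset.card_le_card hsub
  have h3 : 0 < ((Finset.Icc j n).filter fun l => v l = v j).card :=
    Finset.card_pos.mpr ⟨j, Finset.mem_filter.mpr ⟨Finset.mem_Icc.mpr ⟨le_rfl, hj.2⟩, rfl⟩⟩
  omega

lemma stdI_lt_of_lt {n : ℕ} {v : ℕ → ℕ} {i j : ℕ} (hi : 1 ≤ i ∧ i ≤ n) (hj : 1 ≤ j ∧ j ≤ n)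
    (h : v i < v j) : stdI n v i < stdI n v j := by
  simp only [stdI, if_pos hi, if_pos hj]
  have hsub : (((Finset.Icc 1 n).filter fun l => v l < v i)
      ∪ ((Finset.Icc 1 i).filter fun l => v l = v i))
      ⊆ (Finset.Icc 1 n).filter fun l => v l < v j := by
    intro x hx
    rcases Finset.mem_union.mp hx with hx | hx
    · rw [Finset.mem_filter] at hx ⊢
      exact ⟨hx.1, by omega⟩
    · rw [Finset.mem_filter, Finset.mem_Icc] at hx ⊢
      exact ⟨⟨hx.1.1, by omega⟩, by omega⟩
  have hdisj : Disjoint ((Finset.Icc 1 n).filter fun l => v l < v i)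
      ((Finset.Icc 1 i).filter fun l => v l = v i) := by
    apply Finset.disjoint_left.mpr
    intro a h1 h2
    rw [Finset.mem_filter] at h1 h2
    omega
  have h1 := Finset.card_union_of_disjoint hdisj
  have h2 := Finset.card_le_card hsub
  have h3 : 0 < ((Finset.Icc 1 j).filter fun l => v l = v j).card :=
    Finset.card_pos.mpr ⟨j, Finset.mem_filter.mpr ⟨Finset.mem_Icc.mpr ⟨hj.1, le_rfl⟩, rfl⟩⟩
  omega

lemma stdD_lt_of_eq {n : ℕ} {v : ℕ → ℕ} {i j : ℕ} (hi : 1 ≤ i ∧ i ≤ n) (hj : 1 ≤ j ∧ j ≤ n)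
    (h : v i = v j) (hlt : j < i) : stdD n v i < stdD n v j := by
  simp only [stdD, if_pos hi, if_pos hj]
  have hA : ((Finset.Icc 1 n).filter fun l => v l < v i)
      = (Finset.Icc 1 n).filter fun l => v l < v j := by
    apply Finset.filter_congr
    intro x _
    rw [h]
  have hBsub : (Finset.Icc i n).filter (fun l => v l = v i)
      ⊆ (Finset.Icc j n).filter fun l => v l = v j := by
    intro x hx
    rw [Finset.mem_filter, Finset.mem_Icc] at hx ⊢
    exact ⟨⟨by omega, hx.1.2⟩, by omega⟩
  have hBlt : ((Finset.Icc i n).filter (fun l => v l = v i)).card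
      < ((Finset.Icc j n).filter fun l => v l = v j).card := by
    apply Finset.card_lt_card
    rw [Finset.ssubset_iff_of_subset hBsub]
    refine ⟨j, Finset.mem_filter.mpr ⟨Finset.mem_Icc.mpr ⟨le_rfl, hj.2⟩, rfl⟩, ?_⟩
    intro hc
    rw [Finset.mem_filter, Finset.mem_Icc] at hc
    omega
  rw [hA]
  omega

lemma stdI_lt_of_eq {n : ℕ} {v : ℕ → ℕ} {i j : ℕ} (hi : 1 ≤ i ∧ i ≤ n) (hj : 1 ≤ j ∧ j ≤ n)
    (h : v i = v j) (hlt : i < j) : stdI n v i < stdI n v j := by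
  simp only [stdI, if_pos hi, if_pos hj]
  have hA : ((Finset.Icc 1 n).filter fun l => v l < v i)
      = (Finset.Icc 1 n).filter fun l => v l < v j := by
    apply Finset.filter_congr
    intro x _
    rw [h]
  have hBsub : (Finset.Icc 1 i).filter (fun l => v l = v i)
      ⊆ (Finset.Icc 1 j).filter fun l => v l = v j := by
    intro x hx
    rw [Finset.mem_filter, Finset.mem_Icc] at hx ⊢
    exact ⟨⟨hx.1.1, by omega⟩, by omega⟩
  have hBlt : ((Finset.Icc 1 i).filter (fun l => v l = v i)).card
      < ((Finset.Icc 1 j).filter fun l => v l = v j).card := by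
    apply Finset.card_lt_card
    rw [Finset.ssubset_iff_of_subset hBsub]
    refine ⟨j, Finset.mem_filter.mpr ⟨Finset.mem_Icc.mpr ⟨hj.1, le_rfl⟩, rfl⟩, ?_⟩
    intro hc
    rw [Finset.mem_filter, Finset.mem_Icc] at hc
    omega
  rw [hA]
  omega

lemma stdD_lt_iff {n : ℕ} {v : ℕ → ℕ} {i j : ℕ} (hi : 1 ≤ i ∧ i ≤ n) (hj : 1 ≤ j ∧ j ≤ n) :
    stdD n v i < stdD n v j ↔ (v i < v j ∨ (v i = v j ∧ j < i)) := by
  constructor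
  · intro h
    rcases lt_trichotomy (v i) (v j) with h' | h' | h'
    · exact Or.inl h'
    · rcases lt_trichotomy i j with h'' | h'' | h''
      · have := stdD_lt_of_eq hj hi h'.symm h''
        omega
      · exact absurd (h'' ▸ h) (lt_irrefl _)
      · exact Or.inr ⟨h', h''⟩
    · have := stdD_lt_of_lt hj hi h'
      omega
  · rintro (h | ⟨h1, h2⟩)
    · exact stdD_lt_of_lt hi hj h
    · exact stdD_lt_of_eq hi hj h1 h2

lemma stdI_lt_iff {n : ℕ} {v : ℕ → ℕ} {i j : ℕ} (hi : 1 ≤ i ∧ i ≤ n) (hj : 1 ≤ j ∧ j ≤ n) :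
    stdI n v i < stdI n v j ↔ (v i < v j ∨ (v i = v j ∧ i < j)) := by
  constructor
  · intro h
    rcases lt_trichotomy (v i) (v j) with h' | h' | h'
    · exact Or.inl h'
    · rcases lt_trichotomy i j with h'' | h'' | h''
      · exact Or.inr ⟨h', h''⟩
      · exact absurd (h'' ▸ h) (lt_irrefl _)
      · have := stdI_lt_of_eq hj hi h'.symm h''
        omega
    · have := stdI_lt_of_lt hj hi h'
      omega
  · rintro (h | ⟨h1, h2⟩)
    · exact stdI_lt_of_lt hi hj h
    · exact stdI_lt_of_eq hi hj h1 h2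

lemma exists_perm {n : ℕ} (w : ℕ → ℕ) (hw : ∀ i, 1 ≤ i → i ≤ n → 1 ≤ w i ∧ w i ≤ n)
    (hinj : ∀ i j, 1 ≤ i → i ≤ n → 1 ≤ j → j ≤ n → w i = w j → i = j)
    (h0 : ∀ i, ¬(1 ≤ i ∧ i ≤ n) → w i = 0) :
    ∃ σ : Equiv.Perm (Fin n), permWord n σ = w := by
  have hlt : ∀ j : Fin n, w ((j : ℕ) + 1) - 1 < n := fun j => by
    have := hw ((j : ℕ) + 1) (by omega) (by omega)
    omega
  have hfinj : Function.Injective (fun j : Fin n => (⟨w ((j : ℕ) + 1) - 1, hlt j⟩ : Fin n)) := by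
    intro a b hab
    have h1 := hw ((a : ℕ) + 1) (by omega) (by omega)
    have h2 := hw ((b : ℕ) + 1) (by omega) (by omega)
    have hval : w ((a : ℕ) + 1) - 1 = w ((b : ℕ) + 1) - 1 := congrArg Fin.val hab
    have := hinj ((a : ℕ) + 1) ((b : ℕ) + 1) (by omega) (by omega) (by omega) (by omega)
      (by omega)
    exact Fin.ext (by omega)
  refine ⟨Equiv.ofBijective _ (Finite.injective_iff_bijective.mp hfinj), ?_⟩
  funext i
  by_cases hi : 1 ≤ i ∧ i ≤ n
  · obtain ⟨j, rfl⟩ := exists_fin_succ_eq hi.1 hi.2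
    rw [permWord_apply']
    show ((⟨w ((j : ℕ) + 1) - 1, hlt j⟩ : Fin n) : ℕ) + 1 = w ((j : ℕ) + 1)
    have := hw ((j : ℕ) + 1) (by omega) (by omega)
    show w ((j : ℕ) + 1) - 1 + 1 = w ((j : ℕ) + 1)
    omega
  · rw [permWord_zero _ hi, h0 i hi]

/-! #### surjectivity -/

lemma exists_vOf_weak {n : ℕ} {v : ℕ → ℕ} (hv : IsCayley n v) :
    ∃ (σ : Equiv.Perm (Fin n)) (T : Finset ℕ),
      T ⊆ desSet n (permWord n σ⁻¹) ∧ vOf n σ T = v := by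
  obtain ⟨hword, k, himg⟩ := hv
  rcases Nat.eq_zero_or_pos n with rfl | hn
  · refine ⟨1, ∅, by simp, ?_⟩
    funext i
    show gOf ∅ (permWord 0 1 i) = v i
    rw [permWord_zero 1 (by omega), gOf_zero]
    exact (hword i (fun hmem => by rw [Set.mem_Icc] at hmem; omega)).symm
  · have himg' : ∀ m, 1 ≤ m → m ≤ n → 1 ≤ v m ∧ v m ≤ k := by
      intro m hm1 hm2
      have : v m ∈ Set.Icc 1 k := himg ▸ Set.mem_image_of_mem v (Set.mem_Icc.mpr ⟨hm1, hm2⟩)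
      exact Set.mem_Icc.mp this
    have hsur : ∀ c, 1 ≤ c → c ≤ k → ∃ l, (1 ≤ l ∧ l ≤ n) ∧ v l = c := by
      intro c hc1 hc2
      have : c ∈ Set.Icc 1 k := Set.mem_Icc.mpr ⟨hc1, hc2⟩
      rw [← himg] at this
      obtain ⟨l, hl, hvl⟩ := this
      exact ⟨l, Set.mem_Icc.mp hl, hvl⟩
    have hk1 : 1 ≤ k := by
      have := himg' 1 le_rfl hn
      omega
    have hwb : ∀ i, 1 ≤ i → i ≤ n → 1 ≤ stdD n v i ∧ stdD n v i ≤ n := fun i p q =>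
      ⟨stdD_pos ⟨p, q⟩, stdD_le ⟨p, q⟩⟩
    have hwinj : ∀ i j, 1 ≤ i → i ≤ n → 1 ≤ j → j ≤ n → stdD n v i = stdD n v j → i = j := by
      intro i j hi1 hi2 hj1 hj2 he
      by_contra hne
      rcases lt_trichotomy (v i) (v j) with h | h | h
      · have := stdD_lt_of_lt ⟨hi1, hi2⟩ ⟨hj1, hj2⟩ h
        omega
      · rcases lt_trichotomy i j with h' | h' | h'
        · have := stdD_lt_of_eq ⟨hj1, hj2⟩ ⟨hi1, hi2⟩ h.symm h'
          omega
        · exact hne h'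
        · have := stdD_lt_of_eq ⟨hi1, hi2⟩ ⟨hj1, hj2⟩ h h'
          omega
      · have := stdD_lt_of_lt ⟨hj1, hj2⟩ ⟨hi1, hi2⟩ h
        omega
    obtain ⟨σ, hσ⟩ := exists_perm (stdD n v) hwb hwinj
      (fun i hi => by simp only [stdD]; rw [if_neg hi])
    have hposb : ∀ m, 1 ≤ m → m ≤ n →
        1 ≤ permWord n σ⁻¹ m ∧ permWord n σ⁻¹ m ≤ n := fun m p q => permWord_bounds σ⁻¹ p q
    have hposw : ∀ m, 1 ≤ m → m ≤ n → stdD n v (permWord n σ⁻¹ m) = m := by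
      intro m p q
      rw [← hσ]
      exact permWord_permWord_inv σ p q
    have key1 : ∀ m, 1 ≤ m → m < n → v (permWord n σ⁻¹ m) ≤ v (permWord n σ⁻¹ (m + 1)) := by
      intro m h1 h2
      have e1 := hposw m h1 (by omega)
      have e2 := hposw (m + 1) (by omega) (by omega)
      have hb1 := hposb m h1 (by omega)
      have hb2 := hposb (m + 1) (by omega) (by omega)
      have hlt : stdD n v (permWord n σ⁻¹ m) < stdD n v (permWord n σ⁻¹ (m + 1)) := by omega
      rcases (stdD_lt_iff hb1 hb2).mp hlt with h | ⟨h, _⟩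
      · exact le_of_lt h
      · exact le_of_eq h
    have key2 : ∀ m, 1 ≤ m → m < n →
        v (permWord n σ⁻¹ (m + 1)) ≤ v (permWord n σ⁻¹ m) + 1 := by
      intro m h1 h2
      have e1 := hposw m h1 (by omega)
      have e2 := hposw (m + 1) (by omega) (by omega)
      have hb1 := hposb m h1 (by omega)
      have hb2 := hposb (m + 1) (by omega) (by omega)
      by_contra hgt
      push_neg at hgt
      have hv1 := himg' _ hb1.1 hb1.2
      have hv2 := himg' _ hb2.1 hb2.2
      obtain ⟨l, hl, hvl⟩ := hsur (v (permWord n σ⁻¹ m) + 1) (by omega) (by omega)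
      have d1 : v (permWord n σ⁻¹ m) < v l := by omega
      have d2 : v l < v (permWord n σ⁻¹ (m + 1)) := by omega
      have g1 := stdD_lt_of_lt hb1 hl d1
      have g2 := stdD_lt_of_lt hl hb2 d2
      have e3 := hposw l hl.1 hl.2
      omega
    have key3 : v (permWord n σ⁻¹ 1) = 1 := by
      have hb1 := hposb 1 le_rfl hn
      have hv1 := himg' _ hb1.1 hb1.2
      by_contra hne
      obtain ⟨l, hl, hvl⟩ := hsur 1 le_rfl hk1
      have d1 : v l < v (permWord n σ⁻¹ 1) := by omega
      have := stdD_lt_of_lt hl hb1 d1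
      have : 1 ≤ stdD n v l := stdD_pos hl
      have := hposw 1 le_rfl hn
      omega
    refine ⟨σ, (Finset.Icc 1 (n - 1)).filter
      (fun m => v (permWord n σ⁻¹ (m + 1)) ≤ v (permWord n σ⁻¹ m)), ?_, ?_⟩
    · intro m hm
      rw [Finset.mem_filter, Finset.mem_Icc] at hm
      obtain ⟨⟨h1, h2⟩, hle⟩ := hm
      rw [mem_desSet]
      refine ⟨⟨h1, h2⟩, ?_⟩
      have heqv : v (permWord n σ⁻¹ (m + 1)) = v (permWord n σ⁻¹ m) :=
        le_antisymm hle (key1 m h1 (by omega))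
      have e1 := hposw m h1 (by omega)
      have e2 := hposw (m + 1) (by omega) (by omega)
      have hb1 := hposb m h1 (by omega)
      have hb2 := hposb (m + 1) (by omega) (by omega)
      have hlt : stdD n v (permWord n σ⁻¹ m) < stdD n v (permWord n σ⁻¹ (m + 1)) := by omega
      rcases (stdD_lt_iff hb1 hb2).mp hlt with h | ⟨_, h⟩
      · omega
      · exact le_of_lt h
    · set T := (Finset.Icc 1 (n - 1)).filter
        (fun m => v (permWord n σ⁻¹ (m + 1)) ≤ v (permWord n σ⁻¹ m)) with hT
      have hval : ∀ m, 1 ≤ m → m ≤ n → v (permWord n σ⁻¹ m) = gOf T m := by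
        intro m hm1
        induction m, hm1 using Nat.le_induction with
        | base =>
          intro _
          rw [gOf_one]
          exact key3
        | succ m hm ih =>
          intro hmn
          have hiv := ih (by omega)
          by_cases hmT : m ∈ T
          · rw [gOf_succ T hm, if_pos hmT, ← hiv]
            have hle := (Finset.mem_filter.mp hmT).2
            exact le_antisymm hle (key1 m hm (by omega))
          · rw [gOf_succ T hm, if_neg hmT, ← hiv]
            have hnotle : ¬ v (permWord n σ⁻¹ (m + 1)) ≤ v (permWord n σ⁻¹ m) := by
              intro hle
              exact hmT (Finset.mem_filter.mpr ⟨Finset.mem_Icc.mpr ⟨hm, by omega⟩, hle⟩)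
            have := key2 m hm (by omega)
            omega
      funext i
      by_cases hi : 1 ≤ i ∧ i ≤ n
      · have hb := permWord_bounds σ hi.1 hi.2
        show gOf T (permWord n σ i) = v i
        rw [← hval (permWord n σ i) hb.1 hb.2, permWord_inv_permWord σ hi.1 hi.2]
      · show gOf T (permWord n σ i) = v i
        rw [permWord_zero σ hi, gOf_zero]
        exact (hword i (fun hmem => hi (Set.mem_Icc.mp hmem))).symm

lemma exists_vOf_strict {n : ℕ} {v : ℕ → ℕ} (hv : IsCayley n v) :
    ∃ (σ : Equiv.Perm (Fin n)) (T : Finset ℕ),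
      T ⊆ ascSet n (permWord n σ⁻¹) ∧ vOf n σ T = v := by
  obtain ⟨hword, k, himg⟩ := hv
  rcases Nat.eq_zero_or_pos n with rfl | hn
  · refine ⟨1, ∅, by simp, ?_⟩
    funext i
    show gOf ∅ (permWord 0 1 i) = v i
    rw [permWord_zero 1 (by omega), gOf_zero]
    exact (hword i (fun hmem => by rw [Set.mem_Icc] at hmem; omega)).symm
  · have himg' : ∀ m, 1 ≤ m → m ≤ n → 1 ≤ v m ∧ v m ≤ k := by
      intro m hm1 hm2
      have : v m ∈ Set.Icc 1 k := himg ▸ Set.mem_image_of_mem v (Set.mem_Icc.mpr ⟨hm1, hm2⟩)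
      exact Set.mem_Icc.mp this
    have hsur : ∀ c, 1 ≤ c → c ≤ k → ∃ l, (1 ≤ l ∧ l ≤ n) ∧ v l = c := by
      intro c hc1 hc2
      have : c ∈ Set.Icc 1 k := Set.mem_Icc.mpr ⟨hc1, hc2⟩
      rw [← himg] at this
      obtain ⟨l, hl, hvl⟩ := this
      exact ⟨l, Set.mem_Icc.mp hl, hvl⟩
    have hk1 : 1 ≤ k := by
      have := himg' 1 le_rfl hn
      omega
    have hwb : ∀ i, 1 ≤ i → i ≤ n → 1 ≤ stdI n v i ∧ stdI n v i ≤ n := fun i p q =>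
      ⟨stdI_pos ⟨p, q⟩, stdI_le ⟨p, q⟩⟩
    have hwinj : ∀ i j, 1 ≤ i → i ≤ n → 1 ≤ j → j ≤ n → stdI n v i = stdI n v j → i = j := by
      intro i j hi1 hi2 hj1 hj2 he
      by_contra hne
      rcases lt_trichotomy (v i) (v j) with h | h | h
      · have := stdI_lt_of_lt ⟨hi1, hi2⟩ ⟨hj1, hj2⟩ h
        omega
      · rcases lt_trichotomy i j with h' | h' | h'
        · have := stdI_lt_of_eq ⟨hi1, hi2⟩ ⟨hj1, hj2⟩ h h'
          omega
        · exact hne h'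
        · have := stdI_lt_of_eq ⟨hj1, hj2⟩ ⟨hi1, hi2⟩ h.symm h'
          omega
      · have := stdI_lt_of_lt ⟨hj1, hj2⟩ ⟨hi1, hi2⟩ h
        omega
    obtain ⟨σ, hσ⟩ := exists_perm (stdI n v) hwb hwinj
      (fun i hi => by simp only [stdI]; rw [if_neg hi])
    have hposb : ∀ m, 1 ≤ m → m ≤ n →
        1 ≤ permWord n σ⁻¹ m ∧ permWord n σ⁻¹ m ≤ n := fun m p q => permWord_bounds σ⁻¹ p q
    have hposw : ∀ m, 1 ≤ m → m ≤ n → stdI n v (permWord n σ⁻¹ m) = m := by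
      intro m p q
      rw [← hσ]
      exact permWord_permWord_inv σ p q
    have key1 : ∀ m, 1 ≤ m → m < n → v (permWord n σ⁻¹ m) ≤ v (permWord n σ⁻¹ (m + 1)) := by
      intro m h1 h2
      have e1 := hposw m h1 (by omega)
      have e2 := hposw (m + 1) (by omega) (by omega)
      have hb1 := hposb m h1 (by omega)
      have hb2 := hposb (m + 1) (by omega) (by omega)
      have hlt : stdI n v (permWord n σ⁻¹ m) < stdI n v (permWord n σ⁻¹ (m + 1)) := by omega
      rcases (stdI_lt_iff hb1 hb2).mp hlt with h | ⟨h, _⟩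
      · exact le_of_lt h
      · exact le_of_eq h
    have key2 : ∀ m, 1 ≤ m → m < n →
        v (permWord n σ⁻¹ (m + 1)) ≤ v (permWord n σ⁻¹ m) + 1 := by
      intro m h1 h2
      have e1 := hposw m h1 (by omega)
      have e2 := hposw (m + 1) (by omega) (by omega)
      have hb1 := hposb m h1 (by omega)
      have hb2 := hposb (m + 1) (by omega) (by omega)
      by_contra hgt
      push_neg at hgt
      have hv1 := himg' _ hb1.1 hb1.2
      have hv2 := himg' _ hb2.1 hb2.2
      obtain ⟨l, hl, hvl⟩ := hsur (v (permWord n σ⁻¹ m) + 1) (by omega) (by omega)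
      have d1 : v (permWord n σ⁻¹ m) < v l := by omega
      have d2 : v l < v (permWord n σ⁻¹ (m + 1)) := by omega
      have g1 := stdI_lt_of_lt hb1 hl d1
      have g2 := stdI_lt_of_lt hl hb2 d2
      have e3 := hposw l hl.1 hl.2
      omega
    have key3 : v (permWord n σ⁻¹ 1) = 1 := by
      have hb1 := hposb 1 le_rfl hn
      have hv1 := himg' _ hb1.1 hb1.2
      by_contra hne
      obtain ⟨l, hl, hvl⟩ := hsur 1 le_rfl hk1
      have d1 : v l < v (permWord n σ⁻¹ 1) := by omega
      have := stdI_lt_of_lt hl hb1 d1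
      have : 1 ≤ stdI n v l := stdI_pos hl
      have := hposw 1 le_rfl hn
      omega
    refine ⟨σ, (Finset.Icc 1 (n - 1)).filter
      (fun m => v (permWord n σ⁻¹ (m + 1)) ≤ v (permWord n σ⁻¹ m)), ?_, ?_⟩
    · intro m hm
      rw [Finset.mem_filter, Finset.mem_Icc] at hm
      obtain ⟨⟨h1, h2⟩, hle⟩ := hm
      rw [mem_ascSet]
      refine ⟨⟨h1, h2⟩, ?_⟩
      have heqv : v (permWord n σ⁻¹ (m + 1)) = v (permWord n σ⁻¹ m) :=
        le_antisymm hle (key1 m h1 (by omega))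
      have e1 := hposw m h1 (by omega)
      have e2 := hposw (m + 1) (by omega) (by omega)
      have hb1 := hposb m h1 (by omega)
      have hb2 := hposb (m + 1) (by omega) (by omega)
      have hlt : stdI n v (permWord n σ⁻¹ m) < stdI n v (permWord n σ⁻¹ (m + 1)) := by omega
      rcases (stdI_lt_iff hb1 hb2).mp hlt with h | ⟨_, h⟩
      · omega
      · exact le_of_lt h
    · set T := (Finset.Icc 1 (n - 1)).filter
        (fun m => v (permWord n σ⁻¹ (m + 1)) ≤ v (permWord n σ⁻¹ m)) with hT
      have hval : ∀ m, 1 ≤ m → m ≤ n → v (permWord n σ⁻¹ m) = gOf T m := by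
        intro m hm1
        induction m, hm1 using Nat.le_induction with
        | base =>
          intro _
          rw [gOf_one]
          exact key3
        | succ m hm ih =>
          intro hmn
          have hiv := ih (by omega)
          by_cases hmT : m ∈ T
          · rw [gOf_succ T hm, if_pos hmT, ← hiv]
            have hle := (Finset.mem_filter.mp hmT).2
            exact le_antisymm hle (key1 m hm (by omega))
          · rw [gOf_succ T hm, if_neg hmT, ← hiv]
            have hnotle : ¬ v (permWord n σ⁻¹ (m + 1)) ≤ v (permWord n σ⁻¹ m) := by
              intro hle
              exact hmT (Finset.mem_filter.mpr ⟨Finset.mem_Icc.mpr ⟨hm, by omega⟩, hle⟩)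
            have := key2 m hm (by omega)
            omega
      funext i
      by_cases hi : 1 ≤ i ∧ i ≤ n
      · have hb := permWord_bounds σ hi.1 hi.2
        show gOf T (permWord n σ i) = v i
        rw [← hval (permWord n σ i) hb.1 hb.2, permWord_inv_permWord σ hi.1 hi.2]
      · show gOf T (permWord n σ i) = v i
        rw [permWord_zero σ hi, gOf_zero]
        exact (hword i (fun hmem => hi (Set.mem_Icc.mp hmem))).symm

/-! #### final assembly helpers -/

lemma desSet_subset_Icc {n : ℕ} (v : ℕ → ℕ) : desSet n v ⊆ Finset.Icc 1 (n - 1) :=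
  Finset.filter_subset _ _

lemma ascSet_subset_Icc {n : ℕ} (v : ℕ → ℕ) : ascSet n v ⊆ Finset.Icc 1 (n - 1) :=
  Finset.filter_subset _ _

lemma one_add_pow_expand (x : MvPolynomial (Fin 2) ℤ) (D : Finset ℕ) :
    (1 + x) ^ D.card = ∑ S ∈ D.powerset, x ^ S.card := by
  classical
  rw [add_comm, ← Finset.prod_const (x + 1), Finset.prod_add]
  refine Finset.sum_congr rfl fun t ht => ?_
  simp [Finset.prod_const]

end Helpers

/-- Theorem 6.5: `A_n(1+s,1+t) = B_n(s,t)` and `A∘_n(1+s,1+t) = B∘_n(s,t)`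
in `ℤ[s,t]`. -/
theorem stmt13 (n : ℕ) :
    ((∑ σ : Equiv.Perm (Fin n),
        (1 + MvPolynomial.X 0 : MvPolynomial (Fin 2) ℤ) ^ des n (permWord n σ) *
          (1 + MvPolynomial.X 1) ^ des n (permWord n σ⁻¹))
      = ∑ᶠ p ∈ BurPairs n,
          (MvPolynomial.X 0 : MvPolynomial (Fin 2) ℤ) ^ (n - wmax n p.1) *
            MvPolynomial.X 1 ^ (n - wmax n p.2)) ∧
    ((∑ σ : Equiv.Perm (Fin n),
        (1 + MvPolynomial.X 0 : MvPolynomial (Fin 2) ℤ) ^ des n (permWord n σ) *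
          (1 + MvPolynomial.X 1) ^ asc n (permWord n σ⁻¹))
      = ∑ᶠ p ∈ BBurPairs n,
          (MvPolynomial.X 0 : MvPolynomial (Fin 2) ℤ) ^ (n - wmax n p.1) *
            MvPolynomial.X 1 ^ (n - wmax n p.2)) := by
  classical
  constructor
  · -- weak case
    have hsetEq : BurPairs n =
        ↑((Finset.univ.sigma fun σ : Equiv.Perm (Fin n) =>
            (desSet n (permWord n σ)).powerset ×ˢ (desSet n (permWord n σ⁻¹)).powerset).image
          fun x => (uOf n x.2.1, vOf n x.1 x.2.2)) := by
      ext p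
      simp only [Finset.coe_image, Set.mem_image, Finset.mem_coe, Finset.mem_sigma,
        Finset.mem_univ, Finset.mem_product, Finset.mem_powerset, true_and, BurPairs,
        Set.mem_setOf_eq]
      constructor
      · rintro ⟨hu, hv, hdes⟩
        obtain ⟨σ, T, hT, hvT⟩ := exists_vOf_weak hv
        have hdv : desSet n p.2 = desSet n (permWord n σ) := by
          rw [← hvT]
          exact desSet_vOf hT
        refine ⟨⟨σ, desSet n p.1, T⟩, ⟨?_, ?_⟩, ?_⟩
        · rw [← hdv]
          exact hdes
        · exact hT
        · exact Prod.ext (uOf_eq_of_isWI hu) hvT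
      · rintro ⟨⟨σ, S, T⟩, ⟨hS, hT⟩, rfl⟩
        have hSIcc : S ⊆ Finset.Icc 1 (n - 1) := hS.trans (desSet_subset_Icc _)
        have hTIcc : T ⊆ Finset.Icc 1 (n - 1) := hT.trans (desSet_subset_Icc _)
        refine ⟨uOf_isWI hSIcc, vOf_isCayley σ hTIcc, ?_⟩
        show desSet n (uOf n S) ⊆ desSet n (vOf n σ T)
        rw [desSet_uOf hSIcc, desSet_vOf hT]
        exact hS
    have hinj : ∀ x ∈ (Finset.univ.sigma fun σ : Equiv.Perm (Fin n) =>
          (desSet n (permWord n σ)).powerset ×ˢ (desSet n (permWord n σ⁻¹)).powerset),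
        ∀ y ∈ (Finset.univ.sigma fun σ : Equiv.Perm (Fin n) =>
          (desSet n (permWord n σ)).powerset ×ˢ (desSet n (permWord n σ⁻¹)).powerset),
        (fun x : Σ _ : Equiv.Perm (Fin n), Finset ℕ × Finset ℕ =>
          (uOf n x.2.1, vOf n x.1 x.2.2)) x
          = (fun x : Σ _ : Equiv.Perm (Fin n), Finset ℕ × Finset ℕ =>
          (uOf n x.2.1, vOf n x.1 x.2.2)) y → x = y := by
      rintro ⟨σx, Sx, Tx⟩ hx ⟨σy, Sy, Ty⟩ hy hxy
      simp only [Finset.mem_sigma, Finset.mem_univ, Finset.mem_product, Finset.mem_powerset,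
        true_and] at hx hy
      have h1 : uOf n Sx = uOf n Sy := congrArg Prod.fst hxy
      have h2 : vOf n σx Tx = vOf n σy Ty := congrArg Prod.snd hxy
      obtain ⟨hσ, hT⟩ := vOf_inj_weak hx.2 hy.2 h2
      have hS : Sx = Sy := by
        rw [← desSet_uOf (hx.1.trans (desSet_subset_Icc _)), h1,
          desSet_uOf (hy.1.trans (desSet_subset_Icc _))]
      subst hσ
      subst hS
      subst hT
      rfl
    rw [hsetEq, finsum_mem_coe_finset, Finset.sum_image hinj, Finset.sum_sigma]
    refine Finset.sum_congr rfl fun σ _ => ?_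
    rw [Finset.sum_product]
    dsimp only
    have hexp1 : ∀ S ∈ (desSet n (permWord n σ)).powerset, n - wmax n (uOf n S) = S.card := by
      intro S hS
      rw [Finset.mem_powerset] at hS
      have hSIcc := hS.trans (desSet_subset_Icc (permWord n σ))
      have hIc : (Finset.Icc 1 (n - 1)).card = n - 1 := by rw [Nat.card_Icc]; omega
      have hcard : S.card ≤ n - 1 := hIc ▸ Finset.card_le_card hSIcc
      rw [wmax_eq (uOf_image hSIcc)]
      omega
    have hexp2 : ∀ T ∈ (desSet n (permWord n σ⁻¹)).powerset,
        n - wmax n (vOf n σ T) = T.card := by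
      intro T hT
      rw [Finset.mem_powerset] at hT
      have hTIcc := hT.trans (desSet_subset_Icc (permWord n σ⁻¹))
      have hIc : (Finset.Icc 1 (n - 1)).card = n - 1 := by rw [Nat.card_Icc]; omega
      have hcard : T.card ≤ n - 1 := hIc ▸ Finset.card_le_card hTIcc
      rw [wmax_eq (vOf_image σ hTIcc)]
      omega
    rw [Finset.sum_congr rfl fun S hS => Finset.sum_congr rfl fun T hT => by
      rw [hexp1 S hS, hexp2 T hT]]
    rw [← Finset.sum_mul_sum]
    simp only [des]
    rw [one_add_pow_expand, one_add_pow_expand]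
  · -- strict case
    have hsetEq : BBurPairs n =
        ↑((Finset.univ.sigma fun σ : Equiv.Perm (Fin n) =>
            (desSet n (permWord n σ)).powerset ×ˢ (ascSet n (permWord n σ⁻¹)).powerset).image
          fun x => (uOf n x.2.1, vOf n x.1 x.2.2)) := by
      ext p
      simp only [Finset.coe_image, Set.mem_image, Finset.mem_coe, Finset.mem_sigma,
        Finset.mem_univ, Finset.mem_product, Finset.mem_powerset, true_and, BBurPairs,
        Set.mem_setOf_eq]
      constructor
      · rintro ⟨hu, hv, hdes⟩
        obtain ⟨σ, T, hT, hvT⟩ := exists_vOf_strict hv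
        have hdv : sdesSet n p.2 = desSet n (permWord n σ) := by
          rw [← hvT]
          exact sdesSet_vOf hT
        refine ⟨⟨σ, desSet n p.1, T⟩, ⟨?_, ?_⟩, ?_⟩
        · rw [← hdv]
          exact hdes
        · exact hT
        · exact Prod.ext (uOf_eq_of_isWI hu) hvT
      · rintro ⟨⟨σ, S, T⟩, ⟨hS, hT⟩, rfl⟩
        have hSIcc : S ⊆ Finset.Icc 1 (n - 1) := hS.trans (desSet_subset_Icc _)
        have hTIcc : T ⊆ Finset.Icc 1 (n - 1) := hT.trans (ascSet_subset_Icc _)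
        refine ⟨uOf_isWI hSIcc, vOf_isCayley σ hTIcc, ?_⟩
        show desSet n (uOf n S) ⊆ sdesSet n (vOf n σ T)
        rw [desSet_uOf hSIcc, sdesSet_vOf hT]
        exact hS
    have hinj : ∀ x ∈ (Finset.univ.sigma fun σ : Equiv.Perm (Fin n) =>
          (desSet n (permWord n σ)).powerset ×ˢ (ascSet n (permWord n σ⁻¹)).powerset),
        ∀ y ∈ (Finset.univ.sigma fun σ : Equiv.Perm (Fin n) =>
          (desSet n (permWord n σ)).powerset ×ˢ (ascSet n (permWord n σ⁻¹)).powerset),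
        (fun x : Σ _ : Equiv.Perm (Fin n), Finset ℕ × Finset ℕ =>
          (uOf n x.2.1, vOf n x.1 x.2.2)) x
          = (fun x : Σ _ : Equiv.Perm (Fin n), Finset ℕ × Finset ℕ =>
          (uOf n x.2.1, vOf n x.1 x.2.2)) y → x = y := by
      rintro ⟨σx, Sx, Tx⟩ hx ⟨σy, Sy, Ty⟩ hy hxy
      simp only [Finset.mem_sigma, Finset.mem_univ, Finset.mem_product, Finset.mem_powerset,
        true_and] at hx hy
      have h1 : uOf n Sx = uOf n Sy := congrArg Prod.fst hxy
      have h2 : vOf n σx Tx = vOf n σy Ty := congrArg Prod.snd hxy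
      obtain ⟨hσ, hT⟩ := vOf_inj_strict hx.2 hy.2 h2
      have hS : Sx = Sy := by
        rw [← desSet_uOf (hx.1.trans (desSet_subset_Icc _)), h1,
          desSet_uOf (hy.1.trans (desSet_subset_Icc _))]
      subst hσ
      subst hS
      subst hT
      rfl
    rw [hsetEq, finsum_mem_coe_finset, Finset.sum_image hinj, Finset.sum_sigma]
    refine Finset.sum_congr rfl fun σ _ => ?_
    rw [Finset.sum_product]
    dsimp only
    have hexp1 : ∀ S ∈ (desSet n (permWord n σ)).powerset, n - wmax n (uOf n S) = S.card := by
      intro S hS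
      rw [Finset.mem_powerset] at hS
      have hSIcc := hS.trans (desSet_subset_Icc (permWord n σ))
      have hIc : (Finset.Icc 1 (n - 1)).card = n - 1 := by rw [Nat.card_Icc]; omega
      have hcard : S.card ≤ n - 1 := hIc ▸ Finset.card_le_card hSIcc
      rw [wmax_eq (uOf_image hSIcc)]
      omega
    have hexp2 : ∀ T ∈ (ascSet n (permWord n σ⁻¹)).powerset,
        n - wmax n (vOf n σ T) = T.card := by
      intro T hT
      rw [Finset.mem_powerset] at hT
      have hTIcc := hT.trans (ascSet_subset_Icc (permWord n σ⁻¹))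
      have hIc : (Finset.Icc 1 (n - 1)).card = n - 1 := by rw [Nat.card_Icc]; omega
      have hcard : T.card ≤ n - 1 := hIc ▸ Finset.card_le_card hTIcc
      rw [wmax_eq (vOf_image σ hTIcc)]
      omega
    rw [Finset.sum_congr rfl fun S hS => Finset.sum_congr rfl fun T hT => by
      rw [hexp1 S hS, hexp2 T hT]]
    rw [← Finset.sum_mul_sum]
    simp only [des, asc]
    rw [one_add_pow_expand, one_add_pow_expand]

end CayPaper
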